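/- Define A(z,x) = [[z² + v + x/2, u(z−y)],[−(2/u)(vz + vy + 1/2 − μ), −z² − v − x/2]] and B(z,x) = [[z/2, u/2],[−v/u, −z/2]], where y, v, u are differentiable functions of x with u nowhere zero. Then the zero-curvature equation ∂A/∂x − ∂B/∂z + AB − BA = 0 holds identically in z if and only if y' = y² + v + x/2, v' = −2yv − 1/2 + μ, and u' = −uy. In particular these equations imply y'' = 2y³ + xy + μ (Painlevé II). -/

import Mathlib

open Matrix

set_option maxHeartbeats 2000000 in
/-- The zero-curvature equation for the Painlevé II Lax pair holds identically in the
spectral variable `z` iff `y' = y² + v + x/2`, `v' = −2yv − 1/2 + μ`, `u' = −uy`;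
in particular these equations imply Painlevé II `y'' = 2y³ + xy + μ`. -/
theorem PII_zero_curvature
    (y v u : ℂ → ℂ) (μ : ℂ)
    (hy : Differentiable ℂ y) (hv : Differentiable ℂ v) (hu : Differentiable ℂ u)
    (hu0 : ∀ x, u x ≠ 0)
    (A B : ℂ → ℂ → Matrix (Fin 2) (Fin 2) ℂ)
    (hA : ∀ z x, A z x = !![z^2 + v x + x/2, u x * (z - y x);
        -(2 / u x) * (v x * z + v x * y x + 1/2 - μ), -(z^2) - v x - x/2])
    (hB : ∀ z x, B z x = !![z/2, u x / 2; -(v x) / u x, -(z/2)]) :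
    ((∀ z x, (Matrix.of fun i j => deriv (fun t => A z t i j) x)
        - (Matrix.of fun i j => deriv (fun t => B t x i j) z)
        + A z x * B z x - B z x * A z x = 0)
      ↔ (∀ x, deriv y x = (y x)^2 + v x + x/2
          ∧ deriv v x = -2 * y x * v x - 1/2 + μ
          ∧ deriv u x = -(u x) * y x))
    ∧ ((∀ x, deriv y x = (y x)^2 + v x + x/2
          ∧ deriv v x = -2 * y x * v x - 1/2 + μ
          ∧ deriv u x = -(u x) * y x)
      → ∀ x, deriv (deriv y) x = 2 * (y x)^3 + x * y x + μ) := by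
  have dA00 : ∀ z x, deriv (fun t => A z t 0 0) x = deriv v x + 1/2 := by
    intro z x
    have h : (fun t => A z t 0 0) = fun t => z^2 + v t + t/2 := by
      funext t; rw [hA]; simp
    rw [h]
    have h2 : HasDerivAt (fun t => z^2 + v t + t/2) _ x := ((hasDerivAt_const x (z^2)).add (hv x).hasDerivAt).add
      ((hasDerivAt_id x).div_const 2)
    simpa using h2.deriv
  have dA01 : ∀ z x, deriv (fun t => A z t 0 1) x
      = deriv u x * (z - y x) + u x * (0 - deriv y x) := by
    intro z x
    have h : (fun t => A z t 0 1) = fun t => u t * (z - y t) := by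
      funext t; rw [hA]; simp
    rw [h]
    exact ((hu x).hasDerivAt.mul ((hasDerivAt_const x z).sub (hy x).hasDerivAt)).deriv
  have dA10 : ∀ z x, deriv (fun t => A z t 1 0) x
      = -((0 * u x - 2 * deriv u x) / u x ^ 2) * (v x * z + v x * y x + 1/2 - μ)
        + -(2 / u x) * (deriv v x * z + (deriv v x * y x + v x * deriv y x)) := by
    intro z x
    have h : (fun t => A z t 1 0)
        = fun t => -(2 / u t) * (v t * z + v t * y t + 1/2 - μ) := by
      funext t; rw [hA]; simp
    rw [h]
    have h1 : HasDerivAt (fun t => -(2 / u t)) (-((0 * u x - 2 * deriv u x) / u x ^ 2)) x :=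
      ((hasDerivAt_const x (2:ℂ)).div (hu x).hasDerivAt (hu0 x)).neg
    have h2 : HasDerivAt (fun t => v t * z + v t * y t + 1/2 - μ)
        (deriv v x * z + (deriv v x * y x + v x * deriv y x) + 0 - 0) x :=
      ((((hv x).hasDerivAt.mul_const z).add
        ((hv x).hasDerivAt.mul (hy x).hasDerivAt)).add (hasDerivAt_const x (1/2))).sub
        (hasDerivAt_const x μ)
    have : deriv (fun t => -(2 / u t) * (v t * z + v t * y t + 1/2 - μ)) x = _ := (h1.mul h2).deriv
    simpa using this
  have dA11 : ∀ z x, deriv (fun t => A z t 1 1) x = -deriv v x - 1/2 := by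
    intro z x
    have h : (fun t => A z t 1 1) = fun t => -(z^2) - v t - t/2 := by
      funext t; rw [hA]; simp
    rw [h]
    have h2 : HasDerivAt (fun t => -(z^2) - v t - t/2) _ x := (((hasDerivAt_const x (-(z^2))).sub (hv x).hasDerivAt).sub
      ((hasDerivAt_id x).div_const 2))
    simpa using h2.deriv
  have dB00 : ∀ z x, deriv (fun t => B t x 0 0) z = 1/2 := by
    intro z x
    have h : (fun t => B t x 0 0) = fun t => t/2 := by
      funext t; rw [hB]; simp
    rw [h]
    simpa using ((hasDerivAt_id z).div_const 2).deriv
  have dB01 : ∀ z x, deriv (fun t => B t x 0 1) z = 0 := by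
    intro z x
    have h : (fun t => B t x 0 1) = fun _ => u x / 2 := by
      funext t; rw [hB]; simp
    rw [h]; exact deriv_const z _
  have dB10 : ∀ z x, deriv (fun t => B t x 1 0) z = 0 := by
    intro z x
    have h : (fun t => B t x 1 0) = fun _ => -(v x) / u x := by
      funext t; rw [hB]; simp
    rw [h]; exact deriv_const z _
  have dB11 : ∀ z x, deriv (fun t => B t x 1 1) z = -(1/2) := by
    intro z x
    have h : (fun t => B t x 1 1) = fun t => -(t/2) := by
      funext t; rw [hB]; simp
    rw [h]
    simpa using ((hasDerivAt_id z).div_const 2).neg.deriv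
  constructor
  · constructor
    · intro H x
      have e00 := congrFun (congrFun (H 0 x) 0) 0
      have e010 := congrFun (congrFun (H 0 x) 0) 1
      have e011 := congrFun (congrFun (H 1 x) 0) 1
      simp only [Matrix.sub_apply, Matrix.add_apply, Matrix.of_apply, Matrix.mul_apply,
        Fin.sum_univ_two, Matrix.zero_apply, dA00, dA01, dB00, dB01] at e00 e010 e011
      simp only [hA, hB, Matrix.of_apply, Matrix.cons_val', Matrix.cons_val_zero, Matrix.cons_val_one,
        Matrix.head_cons, Matrix.head_fin_const, Matrix.empty_val',
        Matrix.cons_val_fin_one] at e00 e010 e011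
      have hu' : deriv u x = -(u x) * y x := by linear_combination e011 - e010
      have e010' : u x * (deriv y x - ((y x)^2 + v x + x/2)) = 0 := by
        linear_combination -e010 - y x * hu'
      have hy' : deriv y x = (y x)^2 + v x + x/2 :=
        sub_eq_zero.mp ((mul_eq_zero.mp e010').resolve_left (hu0 x))
      refine ⟨hy', ?_, hu'⟩
      field_simp [hu0 x] at e00
      have hne : (u x)^2 ≠ 0 := pow_ne_zero 2 (hu0 x)
      have h : (u x)^2 * (deriv v x - (-2*y x*v x - 1/2 + μ)) = 0 := by
        linear_combination (u x)^2 / 4 * e00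
      exact sub_eq_zero.mp ((mul_eq_zero.mp h).resolve_left hne)
    · intro H z x
      obtain ⟨hy', hv', hu'⟩ := H x
      ext i j
      have h6 : u x ^ 6 * ((u x)⁻¹) ^ 5 = u x := by
        rw [inv_pow, pow_succ, mul_comm (u x ^ 5) (u x), mul_assoc,
          mul_inv_cancel₀ (pow_ne_zero 5 (hu0 x)), mul_one]
      have h2a : u x ^ 2 * (u x)⁻¹ = u x := by
        rw [pow_two, mul_assoc, mul_inv_cancel₀ (hu0 x), mul_one]
      fin_cases i <;> fin_cases j <;>
        (simp only [Fin.mk_zero, Fin.mk_one, Matrix.sub_apply, Matrix.add_apply,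
          Matrix.of_apply, Matrix.mul_apply, Fin.sum_univ_two, Matrix.zero_apply,
          dA00, dA01, dA10, dA11, dB00, dB01, dB10, dB11, Fin.isValue];
         simp only [hA, hB, Matrix.of_apply, Matrix.cons_val', Matrix.cons_val_zero,
          Matrix.cons_val_one, Matrix.head_cons, Matrix.head_fin_const, Matrix.empty_val',
          Matrix.cons_val_fin_one, Fin.isValue];
         simp only [hy', hv', hu'];
         field_simp [hu0 x])
      · ring
      · ring
      · ring
      · ring
  · intro H x
    have hyd : deriv y = fun s => (y s)^2 + v s + s/2 := funext fun s => (H s).1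
    have hD : HasDerivAt (fun s => (y s)^2 + v s + s/2)
        ((2:ℕ) * y x ^ (2-1) * deriv y x + deriv v x + 1/2) x := by
      have : HasDerivAt (fun s => (y s)^2 + v s + s/2) _ x := (((hy x).hasDerivAt.pow 2).add (hv x).hasDerivAt).add
        ((hasDerivAt_id x).div_const 2)
      simpa using this
    rw [hyd, hD.deriv]
    obtain ⟨h1, h2, -⟩ := H x
    push_cast
    linear_combination (2 * y x) * h1 + h2
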